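/- Pushout property of the node polytope: let P ⊆ ℝⁿ be convex, let ρ : P → [0,∞) be affine, let E = {(p,a,b) ∈ P × [0,∞)² : a+b = ρ(p)}, and let F₀ = {(p,0,ρ(p))}, F₁ = {(p,ρ(p),0)} be the two faces of E mapping isomorphically to P. Then any pair of affine maps g₀, g₁ : P → ℝᵐ satisfying the compatibility condition g₀ = g₁ on {p : ρ(p) = 0} extends to at most one affine map G : E → ℝᵐ with G(p,0,ρ(p)) = g₀(p) and G(p,ρ(p),0) = g₁(p), provided ρ is not identically zero on the affine hull of P; moreover if such G exists it is unique because F₀ ∪ F₁ affinely spans E. -/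
import Mathlib

lemma affineMap_eqOn_span {V W : Type*} [AddCommGroup V] [Module ℝ V]
    [AddCommGroup W] [Module ℝ W] {f g : V →ᵃ[ℝ] W} {s : Set V}
    (h : Set.EqOn f g s) : Set.EqOn f g (affineSpan ℝ s : Set V) := by
  let S : AffineSubspace ℝ V :=
    { carrier := {x | f x = g x}
      smul_vsub_vadd_mem' := by
        intro c p1 p2 p3 h1 h2 h3
        simp only [Set.mem_setOf_eq] at *
        have hf : f (c • (p1 -ᵥ p2) +ᵥ p3) = c • (f p1 -ᵥ f p2) +ᵥ f p3 := by
          rw [f.map_vadd, f.linear.map_smul, f.linearMap_vsub]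
        have hg : g (c • (p1 -ᵥ p2) +ᵥ p3) = c • (g p1 -ᵥ g p2) +ᵥ g p3 := by
          rw [g.map_vadd, g.linear.map_smul, g.linearMap_vsub]
        rw [hf, hg, h1, h2, h3] }
  have hle : affineSpan ℝ s ≤ S := affineSpan_le.mpr h
  intro x hx
  exact hle hx

/-- Pushout property of the node polytope
`E = {(p,a,b) : p ∈ P, a,b ≥ 0, a+b = ρ(p)}`: the two faces
`F₀ = {(p,0,ρ p)}` and `F₁ = {(p,ρ p,0)}` affinely span `E`, so an affine map
on `E` is determined by its restrictions to `F₀` and `F₁`; in particular, given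
`g₀, g₁ : P → ℝᵐ` agreeing on `{ρ = 0}`, there is at most one affine
`G : E → ℝᵐ` with `G(p,0,ρ p) = g₀ p` and `G(p,ρ p,0) = g₁ p`. -/
theorem node_polytope_pushout {n m : ℕ}
    (P : Set (Fin n → ℝ)) (hP : Convex ℝ P)
    (ρ : (Fin n → ℝ) →ᵃ[ℝ] ℝ) (hρ : ∀ p ∈ P, 0 ≤ ρ p)
    (hnz : ∃ x ∈ (affineSpan ℝ P : Set (Fin n → ℝ)), ρ x ≠ 0) :
    (affineSpan ℝ ((fun p => (p, (0 : ℝ), ρ p)) '' P ∪ (fun p => (p, ρ p, (0 : ℝ))) '' P) =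
      affineSpan ℝ
        {z : (Fin n → ℝ) × ℝ × ℝ | z.1 ∈ P ∧ 0 ≤ z.2.1 ∧ 0 ≤ z.2.2 ∧ z.2.1 + z.2.2 = ρ z.1}) ∧
    ∀ (g₀ g₁ : (Fin n → ℝ) →ᵃ[ℝ] (Fin m → ℝ)),
      (∀ p ∈ P, ρ p = 0 → g₀ p = g₁ p) →
      ∀ (G G' : ((Fin n → ℝ) × ℝ × ℝ) →ᵃ[ℝ] (Fin m → ℝ)),
        (∀ p ∈ P, G (p, 0, ρ p) = g₀ p ∧ G (p, ρ p, 0) = g₁ p) →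
        (∀ p ∈ P, G' (p, 0, ρ p) = g₀ p ∧ G' (p, ρ p, 0) = g₁ p) →
        Set.EqOn G G'
          {z : (Fin n → ℝ) × ℝ × ℝ | z.1 ∈ P ∧ 0 ≤ z.2.1 ∧ 0 ≤ z.2.2 ∧ z.2.1 + z.2.2 = ρ z.1} := by
  set F : Set ((Fin n → ℝ) × ℝ × ℝ) :=
    (fun p => (p, (0 : ℝ), ρ p)) '' P ∪ (fun p => (p, ρ p, (0 : ℝ))) '' P with hF
  set E : Set ((Fin n → ℝ) × ℝ × ℝ) :=
    {z : (Fin n → ℝ) × ℝ × ℝ | z.1 ∈ P ∧ 0 ≤ z.2.1 ∧ 0 ≤ z.2.2 ∧ z.2.1 + z.2.2 = ρ z.1}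
    with hE
  have hFE : F ⊆ E := by
    rintro z (⟨p, hp, rfl⟩ | ⟨p, hp, rfl⟩)
    · exact ⟨hp, le_refl 0, hρ p hp, by simp⟩
    · exact ⟨hp, hρ p hp, le_refl 0, by simp⟩
  have hEspan : E ⊆ (affineSpan ℝ F : Set _) := by
    rintro ⟨p, a, b⟩ ⟨hp, ha, hb, hab⟩
    simp only at hp ha hb hab
    have h0 : (p, (0 : ℝ), ρ p) ∈ affineSpan ℝ F :=
      subset_affineSpan ℝ F (Or.inl ⟨p, hp, rfl⟩)
    have h1 : (p, ρ p, (0 : ℝ)) ∈ affineSpan ℝ F :=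
      subset_affineSpan ℝ F (Or.inr ⟨p, hp, rfl⟩)
    by_cases hzero : ρ p = 0
    · have ha0 : a = 0 := le_antisymm (by linarith) ha
      have hb0 : b = 0 := le_antisymm (by linarith) hb
      have : ((p, a, b) : (Fin n → ℝ) × ℝ × ℝ) = (p, 0, ρ p) := by
        rw [ha0, hb0, hzero]
      rw [this]; exact h0
    · have hmem := AffineMap.lineMap_mem (a / ρ p) h0 h1
      have : AffineMap.lineMap ((p, (0 : ℝ), ρ p) : (Fin n → ℝ) × ℝ × ℝ)
          (p, ρ p, (0 : ℝ)) (a / ρ p) = (p, a, b) := by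
        simp only [AffineMap.lineMap_apply]
        have h1' : a / ρ p * ρ p = a := div_mul_cancel₀ a hzero
        ext i <;>
          simp [Prod.ext_iff, Prod.smul_def, smul_eq_mul, h1'] <;> linarith
      rwa [this] at hmem
  have hspan : affineSpan ℝ F = affineSpan ℝ E := by
    apply le_antisymm
    · exact affineSpan_mono ℝ hFE
    · exact affineSpan_le.mpr (hEspan.trans (by rfl))
  refine ⟨hspan, ?_⟩
  intro g₀ g₁ hcomp G G' hG hG'
  have hFeq : Set.EqOn G G' F := by
    rintro z (⟨p, hp, rfl⟩ | ⟨p, hp, rfl⟩)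
    · rw [(hG p hp).1, (hG' p hp).1]
    · rw [(hG p hp).2, (hG' p hp).2]
  have := affineMap_eqOn_span hFeq
  exact fun z hz => this (hEspan hz)
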